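/- The complex function F_{n,k}(z) = ∫₀^z (1 - ζ^n)^{-k/n} dζ is injective (univalent) on the open unit disk 𝔻 = {z ∈ ℂ : |z| < 1}, where (1 - ζ^n)^{-k/n} is the analytic branch on 𝔻 taking the value 1 at 0. -/

import Mathlib

open Complex

theorem stmt_7 (n : ℕ) (hn : 2 ≤ n) (k : ℝ) (hk1 : 1 ≤ k) (hkn : k < n)
    (F : ℂ → ℂ) (hF0 : F 0 = 0)
    (hF : ∀ z ∈ Metric.ball (0:ℂ) 1,
      HasDerivAt F (Complex.exp (-(k / n : ℂ) * Complex.log (1 - z ^ n))) z) :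
    Set.InjOn F (Metric.ball (0:ℂ) 1) := by
  set d : ℂ → ℂ := fun z => Complex.exp (-(k / n : ℂ) * Complex.log (1 - z ^ n)) with hd
  have hn0 : (0:ℝ) < n := by positivity
  have hkn' : k / n < 1 := (div_lt_one hn0).2 hkn
  have hkpos : 0 < k / n := div_pos (lt_of_lt_of_le one_pos hk1) hn0
  -- positive real part of 1 - z^n on the ball
  have hre : ∀ z ∈ Metric.ball (0:ℂ) 1, 0 < (1 - z ^ n).re := by
    intro z hz
    have hz1 : ‖z‖ < 1 := by simpa using hz
    have h1 : ‖z ^ n‖ < 1 := by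
      rw [norm_pow]
      exact pow_lt_one₀ (norm_nonneg z) hz1 (by omega)
    have h2 : (z ^ n).re ≤ ‖z ^ n‖ := Complex.re_le_norm _
    simp only [Complex.sub_re, Complex.one_re]
    linarith
  -- positivity of re of d
  have hdpos : ∀ z ∈ Metric.ball (0:ℂ) 1, 0 < (d z).re := by
    intro z hz
    have hw := hre z hz
    set w : ℂ := 1 - z ^ n with hwdef
    have harg : |Complex.arg w| < Real.pi / 2 :=
      Complex.abs_arg_lt_pi_div_two_iff.2 (Or.inl hw)
    have hcoef : (-(k / n : ℂ)) = ((-(k/n) : ℝ) : ℂ) := by push_cast; ring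
    have him : ((-(k / n : ℂ)) * Complex.log w).im = -(k/n) * Complex.arg w := by
      rw [hcoef]; simp [Complex.mul_im, Complex.log_im]
    have hre' : 0 < Real.cos ((-(k / n : ℂ)) * Complex.log w).im := by
      rw [him]
      apply Real.cos_pos_of_mem_Ioo
      constructor
      · nlinarith [abs_lt.1 harg, neg_abs_le (Complex.arg w), le_abs_self (Complex.arg w)]
      · nlinarith [abs_lt.1 harg, neg_abs_le (Complex.arg w), le_abs_self (Complex.arg w)]
    rw [hd]
    simp only [Complex.exp_re]
    positivity
  -- continuity of d on the ball
  have hdcont : ContinuousOn d (Metric.ball (0:ℂ) 1) := by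
    apply ContinuousOn.cexp
    apply ContinuousOn.mul continuousOn_const
    intro z hz
    have hg : ContinuousAt (fun z : ℂ => 1 - z ^ n) z :=
      (continuous_const.sub (continuous_pow n)).continuousAt
    have : ContinuousAt (fun z : ℂ => Complex.log (1 - z ^ n)) z :=
      ContinuousAt.comp (g := Complex.log) (f := fun z : ℂ => 1 - z ^ n)
        (_root_.continuousAt_clog (Or.inl (hre z hz))) hg
    exact this.continuousWithinAt
  intro z₁ h₁ z₂ h₂ heq
  by_contra hne
  have hsub : z₂ - z₁ ≠ 0 := sub_ne_zero.2 (Ne.symm hne)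
  set γ : ℝ → ℂ := fun t => z₁ + (t:ℂ) * (z₂ - z₁) with hγ
  have hγmem : ∀ t ∈ Set.Icc (0:ℝ) 1, γ t ∈ Metric.ball (0:ℂ) 1 := by
    intro t ht
    have := convex_ball (0:ℂ) 1 h₁ h₂
      (show (0:ℝ) ≤ 1 - t by linarith [ht.2]) ht.1 (by ring)
    have heqγ : γ t = (1 - t) • z₁ + t • z₂ := by
      simp [hγ, Complex.real_smul]; push_cast; ring
    rwa [heqγ]
  have hγcont : ContinuousOn γ (Set.Icc (0:ℝ) 1) :=
    (continuous_const.add (Complex.continuous_ofReal.mul continuous_const)).continuousOn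
  have hderiv : ∀ t ∈ Set.Icc (0:ℝ) 1,
      HasDerivAt (fun t : ℝ => F (γ t)) (d (γ t) * (z₂ - z₁)) t := by
    intro t ht
    have hmem := hγmem t ht
    have hinner : HasDerivAt (fun s : ℂ => z₁ + s * (z₂ - z₁)) (z₂ - z₁) (t:ℂ) := by
      simpa using ((hasDerivAt_id (t:ℂ)).mul_const (z₂ - z₁)).const_add z₁
    have hcomp : HasDerivAt (fun s : ℂ => F (z₁ + s * (z₂ - z₁)))
        (d (γ t) * (z₂ - z₁)) (t:ℂ) := (hF (γ t) hmem).comp (t:ℂ) hinner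
    exact hcomp.comp_ofReal
  have hcontd : ContinuousOn (fun t : ℝ => d (γ t)) (Set.Icc (0:ℝ) 1) :=
    hdcont.comp hγcont hγmem
  have hint : IntervalIntegrable (fun t : ℝ => d (γ t) * (z₂ - z₁)) MeasureTheory.volume 0 1 :=
    ((hcontd.mul continuousOn_const).mono (by rw [Set.uIcc_of_le (by norm_num)])).intervalIntegrable
  have hFTC : ∫ t in (0:ℝ)..1, d (γ t) * (z₂ - z₁) = F (γ 1) - F (γ 0) :=
    intervalIntegral.integral_eq_sub_of_hasDerivAt
      (fun t ht => hderiv t (by rwa [Set.uIcc_of_le (by norm_num)] at ht)) hint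
  have hγ0 : γ 0 = z₁ := by simp [hγ]
  have hγ1 : γ 1 = z₂ := by simp [hγ]
  rw [hγ0, hγ1, heq, sub_self] at hFTC
  rw [intervalIntegral.integral_mul_const, mul_eq_zero] at hFTC
  have hI0 : (∫ t in (0:ℝ)..1, d (γ t)) = 0 := hFTC.resolve_right hsub
  have hintd : IntervalIntegrable (fun t : ℝ => d (γ t)) MeasureTheory.volume 0 1 :=
    (hcontd.mono (by rw [Set.uIcc_of_le (by norm_num)])).intervalIntegrable
  have hreI : (∫ t in (0:ℝ)..1, (d (γ t)).re) = 0 := by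
    have := Complex.reCLM.intervalIntegral_comp_comm hintd
    simp only [Complex.reCLM_apply] at this
    rw [this, hI0, Complex.zero_re]
  have hposI : 0 < ∫ t in (0:ℝ)..1, (d (γ t)).re := by
    apply intervalIntegral.intervalIntegral_pos_of_pos_on
    · exact (Complex.continuous_re.comp_continuousOn
        (hcontd.mono (by rw [Set.uIcc_of_le (by norm_num)]))).intervalIntegrable
    · intro t ht
      exact hdpos (γ t) (hγmem t ⟨le_of_lt ht.1, le_of_lt ht.2⟩)
    · norm_num
  linarith
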